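/- Let 0 < n_k < n_m, 0 < F_k < F_m ≤ 1, and suppose z_{k,m} := (F_k n_m - F_m n_k)/(F_m - F_k) ≤ 0 (equivalently F_k n_m ≤ F_m n_k). Define f(z) = log((n_k+z)/n_k) / log((n_m+z)/n_m) for z > 0. Then f is monotone decreasing on (0,∞) and f(1) ≤ n_m/n_k ≤ F_m/F_k. -/

import Mathlib

open Real

lemma logdiff_le (t z : ℝ) (ht : 0 < t) (hz : 0 < z) :
    Real.log (t + z) - Real.log t ≤ z / t := by
  have h := Real.log_le_sub_one_of_pos (show 0 < (t + z) / t by positivity)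
  rw [Real.log_div (by positivity) (by positivity)] at h
  have h2 : (t + z) / t - 1 = z / t := by field_simp; ring
  linarith [h2 ▸ h]

lemma le_logdiff (t z : ℝ) (ht : 0 < t) (hz : 0 < z) :
    z / (t + z) ≤ Real.log (t + z) - Real.log t := by
  have h := Real.log_le_sub_one_of_pos (show 0 < t / (t + z) by positivity)
  rw [Real.log_div (by positivity) (by positivity)] at h
  have h2 : t / (t + z) - 1 = -(z / (t + z)) := by field_simp; ring
  linarith [h2 ▸ h]

lemma logdiff_pos (t z : ℝ) (ht : 0 < t) (hz : 0 < z) :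
    0 < Real.log (t + z) - Real.log t := by
  have := le_logdiff t z ht hz
  have : 0 < z / (t + z) := by positivity
  linarith [le_logdiff t z ht hz]

lemma hasDeriv_logdiff (c t : ℝ) (hc : 0 < c) (ht : 0 < t) :
    HasDerivAt (fun s => Real.log (c + s) - Real.log c) (c + t)⁻¹ t := by
  have h1 : HasDerivAt (fun s : ℝ => c + s) 1 t := (hasDerivAt_id t).const_add c
  have h2 : HasDerivAt (fun s => Real.log (c + s)) (1 / (c + t)) t :=
    h1.log (by positivity)
  simpa [one_div] using h2.sub_const (Real.log c)

lemma auxA (z : ℝ) (hz : 0 < z) :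
    AntitoneOn (fun t => (t + z) * (Real.log (t + z) - Real.log t)) (Set.Ioi (0:ℝ)) := by
  have hderiv : ∀ t ∈ Set.Ioi (0:ℝ),
      HasDerivAt (fun t => (t + z) * (Real.log (t + z) - Real.log t))
        (1 * (Real.log (t + z) - Real.log t) + (t + z) * ((t + z)⁻¹ - t⁻¹)) t := by
    intro t ht
    have ht : (0:ℝ) < t := ht
    have h1 : HasDerivAt (fun t : ℝ => t + z) 1 t := (hasDerivAt_id t).add_const z
    have h2 : HasDerivAt (fun t => Real.log (t + z)) (1 / (t + z)) t := h1.log (by positivity)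
    have h3 : HasDerivAt Real.log t⁻¹ t := Real.hasDerivAt_log (ne_of_gt ht)
    have := h1.mul (h2.sub h3)
    rw [one_div] at this
    exact this
  apply antitoneOn_of_deriv_nonpos (convex_Ioi 0)
  · intro t ht
    exact ((hderiv t ht).differentiableAt).continuousAt.continuousWithinAt
  · rw [interior_Ioi]
    intro t ht
    exact (hderiv t ht).differentiableAt.differentiableWithinAt
  · rw [interior_Ioi]
    intro t ht
    rw [(hderiv t ht).deriv]
    have ht : (0:ℝ) < t := ht
    have h1 : Real.log (t + z) - Real.log t ≤ z / t := logdiff_le t z ht hz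
    have h2 : (t + z) * ((t + z)⁻¹ - t⁻¹) = -(z / t) := by field_simp; ring
    rw [h2]
    linarith

lemma auxB (z : ℝ) (hz : 0 < z) :
    MonotoneOn (fun t => t * (Real.log (t + z) - Real.log t)) (Set.Ioi (0:ℝ)) := by
  have hderiv : ∀ t ∈ Set.Ioi (0:ℝ),
      HasDerivAt (fun t => t * (Real.log (t + z) - Real.log t))
        (1 * (Real.log (t + z) - Real.log t) + t * ((t + z)⁻¹ - t⁻¹)) t := by
    intro t ht
    have ht : (0:ℝ) < t := ht
    have h1 : HasDerivAt (fun t : ℝ => t + z) 1 t := (hasDerivAt_id t).add_const z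
    have h2 : HasDerivAt (fun t => Real.log (t + z)) (1 / (t + z)) t := h1.log (by positivity)
    have h3 : HasDerivAt Real.log t⁻¹ t := Real.hasDerivAt_log (ne_of_gt ht)
    have := (hasDerivAt_id t).mul (h2.sub h3)
    rw [one_div] at this
    exact this
  apply monotoneOn_of_deriv_nonneg (convex_Ioi 0)
  · intro t ht
    exact ((hderiv t ht).differentiableAt).continuousAt.continuousWithinAt
  · rw [interior_Ioi]
    intro t ht
    exact (hderiv t ht).differentiableAt.differentiableWithinAt
  · rw [interior_Ioi]
    intro t ht
    rw [(hderiv t ht).deriv]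
    have ht : (0:ℝ) < t := ht
    have h1 : z / (t + z) ≤ Real.log (t + z) - Real.log t := le_logdiff t z ht hz
    have h2 : t * ((t + z)⁻¹ - t⁻¹) = -(z / (t + z)) := by field_simp; ring
    rw [h2]
    linarith

theorem log_ratio_decreasing_and_bound
    (nk nm Fk Fm : ℝ) (hnk : 0 < nk) (hn : nk < nm)
    (hFk : 0 < Fk) (hF : Fk < Fm) (hFm : Fm ≤ 1)
    (hz : (Fk * nm - Fm * nk) / (Fm - Fk) ≤ 0) :
    AntitoneOn (fun z => Real.log ((nk + z) / nk) / Real.log ((nm + z) / nm))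
        (Set.Ioi (0 : ℝ)) ∧
    Real.log ((nk + 1) / nk) / Real.log ((nm + 1) / nm) ≤ nm / nk ∧
    nm / nk ≤ Fm / Fk := by
  have hnm : (0:ℝ) < nm := lt_trans hnk hn
  -- part 3
  have part3 : nm / nk ≤ Fm / Fk := by
    have hd : 0 < Fm - Fk := sub_pos.mpr hF
    have h1 : Fk * nm - Fm * nk ≤ 0 := by
      by_contra hcon
      push_neg at hcon
      have : 0 < (Fk * nm - Fm * nk) / (Fm - Fk) := by positivity
      linarith
    rw [div_le_div_iff₀ hnk hFk]
    nlinarith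
  -- rewrite f in difference form on the set
  have hEq : ∀ z > (0:ℝ), Real.log ((nk + z) / nk) = Real.log (nk + z) - Real.log nk := by
    intro z hzp; rw [Real.log_div (by positivity) (ne_of_gt hnk)]
  have hEq' : ∀ z > (0:ℝ), Real.log ((nm + z) / nm) = Real.log (nm + z) - Real.log nm := by
    intro z hzp; rw [Real.log_div (by positivity) (ne_of_gt hnm)]
  -- part 2
  have part2 : Real.log ((nk + 1) / nk) / Real.log ((nm + 1) / nm) ≤ nm / nk := by
    have hG := auxB 1 one_pos (Set.mem_Ioi.mpr hnk) (Set.mem_Ioi.mpr hnm) (le_of_lt hn)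
    simp only at hG
    have hqpos : 0 < Real.log (nm + 1) - Real.log nm := logdiff_pos nm 1 hnm one_pos
    rw [hEq 1 one_pos, hEq' 1 one_pos, div_le_div_iff₀ hqpos hnk]
    nlinarith
  -- part 1
  refine ⟨?_, part2, part3⟩
  have hanti : AntitoneOn
      (fun z => (Real.log (nk + z) - Real.log nk) / (Real.log (nm + z) - Real.log nm))
      (Set.Ioi (0:ℝ)) := by
    have hderiv : ∀ z ∈ Set.Ioi (0:ℝ),
        HasDerivAt (fun z => (Real.log (nk + z) - Real.log nk) / (Real.log (nm + z) - Real.log nm))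
          (((nk + z)⁻¹ * (Real.log (nm + z) - Real.log nm) -
            (Real.log (nk + z) - Real.log nk) * (nm + z)⁻¹) /
            (Real.log (nm + z) - Real.log nm) ^ 2) z := by
      intro z hzp
      have hzp : (0:ℝ) < z := hzp
      exact (hasDeriv_logdiff nk z hnk hzp).div (hasDeriv_logdiff nm z hnm hzp)
        (ne_of_gt (logdiff_pos nm z hnm hzp))
    apply antitoneOn_of_deriv_nonpos (convex_Ioi 0)
    · intro z hzp
      exact ((hderiv z hzp).differentiableAt).continuousAt.continuousWithinAt
    · rw [interior_Ioi]
      intro z hzp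
      exact (hderiv z hzp).differentiableAt.differentiableWithinAt
    · rw [interior_Ioi]
      intro z hzp
      rw [(hderiv z hzp).deriv]
      have hzp : (0:ℝ) < z := hzp
      have hq : 0 < Real.log (nm + z) - Real.log nm := logdiff_pos nm z hnm hzp
      have hA := auxA z hzp (Set.mem_Ioi.mpr hnk) (Set.mem_Ioi.mpr hnm) (le_of_lt hn)
      simp only at hA
      apply div_nonpos_of_nonpos_of_nonneg _ (sq_nonneg _)
      have h1 : (nk + z)⁻¹ * (Real.log (nm + z) - Real.log nm) ≤
          (Real.log (nk + z) - Real.log nk) * (nm + z)⁻¹ := by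
        rw [inv_mul_eq_div, ← div_eq_mul_inv, div_le_div_iff₀ (by positivity) (by positivity)]
        nlinarith
      linarith
  intro x hx y hy hxy
  simp only
  rw [hEq x hx, hEq' x hx, hEq y hy, hEq' y hy]
  exact hanti hx hy hxy
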